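/- Let α, χ : ℝ → ℝ be differentiable with χ(t) ≥ 0, and let α_p, g, X : ℝ → ℝ satisfy |g(t)| ≤ X(t) for all t. Suppose α′ = χ² − α² − α_p and χ′ = −2αχ − g (the component form of the quaternion Riccati equation), and that ρ(t) := √(α(t)² + χ(t)²) > 0 on an interval. Then on that interval ρ is differentiable and satisfies the inequality ρ′ ≤ −α ρ + (|α||α_p| + χ X)/ρ. -/

import Mathlib

noncomputable section

/-- if `α′ = χ² − α² − α_p`, `χ′ = −2αχ − g` with `χ ≥ 0` and
`|g| ≤ X`, and `ρ = √(α² + χ²) > 0` on an interval, then on that interval `ρ`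
is differentiable and `ρ′ ≤ −αρ + (|α||α_p| + χX)/ρ`. -/
theorem riccati_magnitude_inequality
    (α χ αp g X : ℝ → ℝ) (a b : ℝ)
    (hα : Differentiable ℝ α) (hχ : Differentiable ℝ χ)
    (hχpos : ∀ t, 0 ≤ χ t)
    (hgX : ∀ t, |g t| ≤ X t)
    (hα' : ∀ t, deriv α t = χ t ^ 2 - α t ^ 2 - αp t)
    (hχ' : ∀ t, deriv χ t = -2 * α t * χ t - g t)
    (hρpos : ∀ t ∈ Set.Ioo a b, 0 < Real.sqrt (α t ^ 2 + χ t ^ 2)) :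
    ∀ t ∈ Set.Ioo a b,
      DifferentiableAt ℝ (fun s => Real.sqrt (α s ^ 2 + χ s ^ 2)) t ∧
      deriv (fun s => Real.sqrt (α s ^ 2 + χ s ^ 2)) t ≤
        -(α t) * Real.sqrt (α t ^ 2 + χ t ^ 2) +
          (|α t| * |αp t| + χ t * X t) / Real.sqrt (α t ^ 2 + χ t ^ 2) := by
  intro t ht
  have hρ := hρpos t ht
  set u : ℝ → ℝ := fun s => α s ^ 2 + χ s ^ 2 with hu_def
  have hupos : 0 < u t := by
    by_contra h
    push_neg at h
    have : Real.sqrt (u t) = 0 := Real.sqrt_eq_zero_of_nonpos h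
    simp only [hu_def] at this
    linarith [hρ]
  have hune : u t ≠ 0 := ne_of_gt hupos
  have hu : HasDerivAt u (2 * α t * deriv α t + 2 * χ t * deriv χ t) t := by
    have h1 := ((hα t).hasDerivAt.pow 2)
    have h2 := ((hχ t).hasDerivAt.pow 2)
    have := h1.add h2
    have e : u = α ^ 2 + χ ^ 2 := by funext s; simp [hu_def]
    rw [e]
    simpa [mul_comm, mul_assoc, mul_left_comm] using this
  have hsq : HasDerivAt (fun s => Real.sqrt (α s ^ 2 + χ s ^ 2))
      ((2 * α t * deriv α t + 2 * χ t * deriv χ t) / (2 * Real.sqrt (u t))) t :=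
    hu.sqrt hune
  refine ⟨hsq.differentiableAt, ?_⟩
  rw [hsq.deriv]
  set ρ : ℝ := Real.sqrt (u t) with hρ_def
  have hρpos' : 0 < ρ := hρ
  have hρsq : ρ ^ 2 = u t := Real.sq_sqrt hupos.le
  have key : 2 * α t * deriv α t + 2 * χ t * deriv χ t ≤
      2 * (-(α t) * u t + (|α t| * |αp t| + χ t * X t)) := by
    rw [hα' t, hχ' t]
    have h1 : -(α t * αp t) ≤ |α t| * |αp t| := by
      rw [← abs_mul]; exact neg_le_abs _
    have h2 : -(χ t * g t) ≤ χ t * X t := by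
      have : -(χ t * g t) ≤ χ t * |g t| := by
        rw [mul_comm, mul_comm (χ t)]
        have := neg_abs_le (g t)
        nlinarith [hχpos t, abs_nonneg (g t)]
      exact this.trans (mul_le_mul_of_nonneg_left (hgX t) (hχpos t))
    simp only [hu_def]
    nlinarith
  have h2ρ : 0 < 2 * ρ := by linarith
  rw [div_le_iff₀ h2ρ]
  have hrhs : (-(α t) * ρ + (|α t| * |αp t| + χ t * X t) / ρ) * (2 * ρ)
      = 2 * (-(α t) * u t + (|α t| * |αp t| + χ t * X t)) := by
    rw [← hρsq]
    field_simp
  rw [hrhs]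
  exact key
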